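/- Consider m parallel links with affine latencies ℓᵢ(x) = aᵢx + bᵢ (aᵢ, bᵢ ≥ 0). Let f and f* be flows for the same rate r, with f a Nash flow of the original latencies (all used links have equal latency not exceeding that of unused links). Then ∑ᵢ fᵢ·ℓᵢ(fᵢ) ≤ ∑ᵢ fᵢ*·ℓᵢ(fᵢ) (variational inequality), and consequently ∑ᵢ fᵢ·ℓᵢ(fᵢ) ≤ (4/3)·∑ᵢ fᵢ*·ℓᵢ(fᵢ*). -/
import Mathlib

/-- m parallel links with affine latencies ℓᵢ(x) = aᵢx + bᵢ (aᵢ, bᵢ ≥ 0). If f is a Nash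
flow and f* any flow for the same rate r, then the variational inequality
∑ fᵢℓᵢ(fᵢ) ≤ ∑ fᵢ*ℓᵢ(fᵢ) holds, and consequently ∑ fᵢℓᵢ(fᵢ) ≤ (4/3)·∑ fᵢ*ℓᵢ(fᵢ*). -/
theorem stmt17 (m : ℕ) (a b f g : Fin m → ℝ) (r : ℝ)
    (ha : ∀ i, 0 ≤ a i) (hb : ∀ i, 0 ≤ b i)
    (hf : ∀ i, 0 ≤ f i) (hg : ∀ i, 0 ≤ g i)
    (hfsum : ∑ i, f i = r) (hgsum : ∑ i, g i = r)
    (ℓval : ℝ)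
    (hnash : ∀ i, (0 < f i → a i * f i + b i = ℓval) ∧ ℓval ≤ a i * f i + b i) :
    ∑ i, f i * (a i * f i + b i) ≤ ∑ i, g i * (a i * f i + b i) ∧
    ∑ i, f i * (a i * f i + b i) ≤ (4 / 3) * ∑ i, g i * (a i * g i + b i) := by
  have h1 : ∑ i, f i * (a i * f i + b i) = r * ℓval := by
    rw [← hfsum, Finset.sum_mul]
    apply Finset.sum_congr rfl
    intro i _
    rcases eq_or_lt_of_le (hf i) with h | h
    · rw [← h]; ring
    · rw [(hnash i).1 h]
  have h2 : r * ℓval ≤ ∑ i, g i * (a i * f i + b i) := by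
    rw [← hgsum, Finset.sum_mul]
    exact Finset.sum_le_sum fun i _ => mul_le_mul_of_nonneg_left (hnash i).2 (hg i)
  have hvar : ∑ i, f i * (a i * f i + b i) ≤ ∑ i, g i * (a i * f i + b i) := h1 ▸ h2
  refine ⟨hvar, ?_⟩
  have key : ∑ i, g i * (a i * f i + b i) ≤
      ∑ i, (g i * (a i * g i + b i) + (1/4) * (f i * (a i * f i + b i))) := by
    apply Finset.sum_le_sum
    intro i _
    nlinarith [mul_nonneg (ha i) (sq_nonneg (g i - f i / 2)), mul_nonneg (hb i) (hf i)]
  rw [Finset.sum_add_distrib, ← Finset.mul_sum] at key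
  linarith
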